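/- Let n ≥ 2 and let f : E^n → E^n be a surjective function. If r₁ > r₂ > 0 are both strongly preserved by f, then r₁ − ⌊r₁/r₂⌋·r₂ is either zero or strongly preserved by f (where ⌊·⌋ denotes the floor function). -/

import Mathlib

open RealInnerProductSpace

lemma orth_unit (n : ℕ) (hn : 2 ≤ n) (u : EuclideanSpace ℝ (Fin n)) :
    ∃ v : EuclideanSpace ℝ (Fin n), ‖v‖ = 1 ∧ ⟪u, v⟫ = 0 := by
  have hbot : (ℝ ∙ u)ᗮ ≠ ⊥ := by
    intro hb
    have h := Submodule.orthogonal_eq_bot_iff.mp hb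
    have h1 : Module.finrank ℝ (ℝ ∙ u) ≤ 1 := by
      rcases eq_or_ne u 0 with rfl | hu
      · rw [Submodule.span_zero_singleton]
        simp
      · rw [finrank_span_singleton hu]
    rw [h] at h1
    have : Module.finrank ℝ (⊤ : Submodule ℝ (EuclideanSpace ℝ (Fin n)))
        = n := by simp [finrank_euclideanSpace]
    omega
  rcases Submodule.exists_mem_ne_zero_of_ne_bot hbot with ⟨v, hv, hv0⟩
  refine ⟨‖v‖⁻¹ • v, ?_, ?_⟩
  · rw [norm_smul]
    simp [norm_ne_zero_iff.mpr hv0]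
  · have := (Submodule.mem_orthogonal _ v).mp hv u (Submodule.mem_span_singleton_self u)
    rw [inner_smul_right, this, mul_zero]

set_option maxHeartbeats 1000000 in
lemma sol_param (n : ℕ) (hn : 2 ≤ n) (p q : EuclideanSpace ℝ (Fin n)) (hpq : p ≠ q)
    (a b s : ℝ) (ha : 0 ≤ a) (hb : 0 ≤ b)
    (hs : s ^ 2 * (2 * dist p q) ^ 2 =
      a ^ 2 * (2 * dist p q) ^ 2 - ((dist p q) ^ 2 + a ^ 2 - b ^ 2) ^ 2) :
    ∃ w w' : EuclideanSpace ℝ (Fin n),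
      dist p w = a ∧ dist q w = b ∧ dist p w' = a ∧ dist q w' = b ∧ dist w w' = 2 * |s| := by
  obtain ⟨v, hv1, hv0⟩ := orth_unit n hn (q - p)
  have hd : 0 < dist p q := dist_pos.mpr hpq
  set d : ℝ := dist p q with hdd
  have hdn : ‖q - p‖ = d := by rw [hdd, dist_eq_norm']
  set t : ℝ := (d ^ 2 + a ^ 2 - b ^ 2) / (2 * d) with htt
  have h2d : (2 : ℝ) * d ≠ 0 := by positivity
  have hd0 : d ≠ 0 := ne_of_gt hd
  have hst : s ^ 2 = a ^ 2 - t ^ 2 := by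
    have ht2 : t * (2 * d) = d ^ 2 + a ^ 2 - b ^ 2 := by rw [htt, div_mul_cancel₀ _ h2d]
    apply mul_right_cancel₀ (pow_ne_zero 2 h2d)
    rw [hs, ← ht2]; ring
  have key : ∀ c e : ℝ, ‖c • (q - p) + e • v‖ ^ 2 = c ^ 2 * d ^ 2 + e ^ 2 := by
    intro c e
    rw [norm_add_sq_real, real_inner_smul_left, real_inner_smul_right, hv0,
      norm_smul, norm_smul, hdn, hv1, Real.norm_eq_abs, Real.norm_eq_abs]
    rw [mul_pow, mul_pow, sq_abs, sq_abs]
    ring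
  have hnorm : ∀ c e r : ℝ, 0 ≤ r → c ^ 2 * d ^ 2 + e ^ 2 = r ^ 2 →
      ‖c • (q - p) + e • v‖ = r := by
    intro c e r hr' h
    have h2 := key c e
    rw [h] at h2
    nlinarith [norm_nonneg (c • (q - p) + e • v), hr']
  refine ⟨p + ((t / d) • (q - p) + s • v), p + ((t / d) • (q - p) + (-s) • v), ?_, ?_, ?_, ?_, ?_⟩
  · rw [dist_eq_norm']
    have h1 : p + ((t / d) • (q - p) + s • v) - p = (t / d) • (q - p) + s • v := by abel
    rw [h1]
    apply hnorm _ _ _ ha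
    field_simp
    nlinarith [hst]
  · rw [dist_eq_norm']
    have h1 : p + ((t / d) • (q - p) + s • v) - q
        = (t / d - 1) • (q - p) + s • v := by
      rw [sub_smul, one_smul]; abel
    rw [h1]
    apply hnorm _ _ _ hb
    have e1 : (t / d - 1) ^ 2 * d ^ 2 = (t - d) ^ 2 := by field_simp
    rw [e1]
    have e2 : 2 * d * t = d ^ 2 + a ^ 2 - b ^ 2 := by rw [htt]; field_simp
    nlinarith [hst]
  · rw [dist_eq_norm']
    have h1 : p + ((t / d) • (q - p) + (-s) • v) - p = (t / d) • (q - p) + (-s) • v := by abel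
    rw [h1]
    apply hnorm _ _ _ ha
    field_simp
    nlinarith [hst]
  · rw [dist_eq_norm']
    have h1 : p + ((t / d) • (q - p) + (-s) • v) - q
        = (t / d - 1) • (q - p) + (-s) • v := by
      rw [sub_smul, one_smul]; abel
    rw [h1]
    apply hnorm _ _ _ hb
    have e1 : (t / d - 1) ^ 2 * d ^ 2 = (t - d) ^ 2 := by field_simp
    rw [e1]
    have e2 : 2 * d * t = d ^ 2 + a ^ 2 - b ^ 2 := by rw [htt]; field_simp
    nlinarith [hst]
  · rw [dist_eq_norm]
    have h1 : p + ((t / d) • (q - p) + s • v) - (p + ((t / d) • (q - p) + (-s) • v))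
        = (2 * s) • v := by
      rw [two_mul, add_smul]
      module
    rw [h1, norm_smul, hv1, mul_one, Real.norm_eq_abs, abs_mul]
    rw [abs_two]

lemma exists_sol (n : ℕ) (hn : 2 ≤ n) (p q : EuclideanSpace ℝ (Fin n))
    (a b : ℝ) (ha : 0 ≤ a) (hb : 0 ≤ b)
    (h1 : |a - b| ≤ dist p q) (h2 : dist p q ≤ a + b) :
    ∃ w, dist p w = a ∧ dist q w = b := by
  rcases eq_or_ne p q with rfl | hpq
  · simp only [dist_self] at h1 h2
    have hab : a = b := by
      have := abs_nonpos_iff.mp h1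
      linarith
    obtain ⟨v, hv1, _⟩ := orth_unit n hn 0
    refine ⟨p + a • v, ?_, ?_⟩
    · rw [dist_eq_norm']
      have : p + a • v - p = a • v := by abel
      rw [this, norm_smul, hv1, mul_one, Real.norm_eq_abs, abs_of_nonneg ha]
    · rw [dist_eq_norm']
      have : p + a • v - p = a • v := by abel
      rw [this, norm_smul, hv1, mul_one, Real.norm_eq_abs, abs_of_nonneg ha, hab]
  · have hd : 0 < dist p q := dist_pos.mpr hpq
    set d : ℝ := dist p q
    have habs := abs_le.mp h1
    have hD : 0 ≤ a ^ 2 * (2 * d) ^ 2 - (d ^ 2 + a ^ 2 - b ^ 2) ^ 2 := by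
      have e1 : 0 ≤ (a + b) ^ 2 - d ^ 2 := by nlinarith [h2, hd]
      have e2 : 0 ≤ d ^ 2 - (a - b) ^ 2 := by nlinarith [habs.1, habs.2]
      nlinarith [mul_nonneg e1 e2]
    set s : ℝ := Real.sqrt (a ^ 2 * (2 * d) ^ 2 - (d ^ 2 + a ^ 2 - b ^ 2) ^ 2) / (2 * d)
    have hs : s ^ 2 * (2 * d) ^ 2 =
        a ^ 2 * (2 * d) ^ 2 - (d ^ 2 + a ^ 2 - b ^ 2) ^ 2 := by
      have h2d : (2 : ℝ) * d ≠ 0 := by positivity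
      rw [div_pow, div_mul_cancel₀ _ (pow_ne_zero 2 h2d), Real.sq_sqrt hD]
    obtain ⟨w, w', hw1, hw2, _, _, _⟩ := sol_param n hn p q hpq a b s ha hb hs
    exact ⟨w, hw1, hw2⟩

lemma two_sol (n : ℕ) (hn : 2 ≤ n) (p q : EuclideanSpace ℝ (Fin n))
    (a b : ℝ) (ha : 0 < a) (hb : 0 < b)
    (h1 : |a - b| ≤ dist p q) (h2 : dist p q < a + b)
    (h3 : dist p q ≠ a - b) (h4 : dist p q ≠ b - a) :
    ∃ w w', w ≠ w' ∧ (dist p w = a ∧ dist q w = b) ∧ (dist p w' = a ∧ dist q w' = b) := by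
  rcases eq_or_ne p q with rfl | hpq
  · simp only [dist_self] at h1 h2 h3 h4
    have hab : a = b := by
      have := abs_nonpos_iff.mp h1
      linarith
    obtain ⟨v, hv1, _⟩ := orth_unit n hn 0
    have hnv : ∀ c : ℝ, 0 ≤ c → ∀ x : EuclideanSpace ℝ (Fin n), x + c • v - x = c • v → True := fun _ _ _ _ => trivial
    refine ⟨p + a • v, p + (-a) • v, ?_, ⟨?_, ?_⟩, ⟨?_, ?_⟩⟩
    · intro h
      have h2 : (p + a • v) - (p + (-a) • v) = (2 * a) • v := by module
      have h3 : ‖(2 * a) • v‖ = 0 := by rw [← h2, h, sub_self, norm_zero]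
      rw [norm_smul, hv1, mul_one, Real.norm_eq_abs] at h3
      have hpos : (0:ℝ) < 2 * a := by linarith
      rw [abs_of_pos hpos] at h3
      linarith
    all_goals
      rw [dist_eq_norm']
      first
      | (have e : p + a • v - p = a • v := by abel
         rw [e, norm_smul, hv1, mul_one, Real.norm_eq_abs, abs_of_nonneg (le_of_lt ha)]
         try rw [hab])
      | (have e : p + (-a) • v - p = (-a) • v := by abel
         rw [e, norm_smul, hv1, mul_one, Real.norm_eq_abs, abs_neg, abs_of_nonneg (le_of_lt ha)]
         try rw [hab])
  · have hd : 0 < dist p q := dist_pos.mpr hpq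
    set d : ℝ := dist p q
    have habs := abs_le.mp h1
    have hD : 0 < a ^ 2 * (2 * d) ^ 2 - (d ^ 2 + a ^ 2 - b ^ 2) ^ 2 := by
      have h5 : a - b < d := lt_of_le_of_ne habs.2 (fun h => h3 h.symm)
      have h6 : b - a < d := by
        have h6' : b - a ≤ d := by linarith [habs.1]
        exact lt_of_le_of_ne h6' (fun h => h4 h.symm)
      have e1 : 0 < (a + b) ^ 2 - d ^ 2 := by nlinarith [h2, hd]
      have e2 : 0 < d ^ 2 - (a - b) ^ 2 := by nlinarith [h5, h6]
      nlinarith [mul_pos e1 e2]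
    set s : ℝ := Real.sqrt (a ^ 2 * (2 * d) ^ 2 - (d ^ 2 + a ^ 2 - b ^ 2) ^ 2) / (2 * d)
    have hspos : 0 < s := by positivity
    have hs : s ^ 2 * (2 * d) ^ 2 =
        a ^ 2 * (2 * d) ^ 2 - (d ^ 2 + a ^ 2 - b ^ 2) ^ 2 := by
      have h2d : (2 : ℝ) * d ≠ 0 := by positivity
      rw [div_pow, div_mul_cancel₀ _ (pow_ne_zero 2 h2d), Real.sq_sqrt (le_of_lt hD)]
    obtain ⟨w, w', hw1, hw2, hw3, hw4, hww⟩ :=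
      sol_param n hn p q hpq a b s (le_of_lt ha) (le_of_lt hb) hs
    refine ⟨w, w', ?_, ⟨hw1, hw2⟩, ⟨hw3, hw4⟩⟩
    intro h
    rw [h, dist_self] at hww
    have : |s| = 0 := by linarith
    rw [abs_eq_zero] at this
    linarith

lemma uniq_sol (n : ℕ) (p q w : EuclideanSpace ℝ (Fin n)) (a b : ℝ) (hpq : p ≠ q)
    (hw1 : dist p w = a) (hw2 : dist q w = b) (ht : |dist p q - a| = b) :
    w = p + (a / dist p q) • (q - p) := by
  have hd : 0 < dist p q := dist_pos.mpr hpq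
  set d : ℝ := dist p q with hdd
  have hd0 : d ≠ 0 := ne_of_gt hd
  have hx : ‖w - p‖ = a := by rw [← dist_eq_norm']; exact hw1
  have hu : ‖q - p‖ = d := by rw [← dist_eq_norm']
  have hxu : ‖(w - p) - (q - p)‖ = b := by
    have e : (w - p) - (q - p) = w - q := by abel
    rw [e, ← dist_eq_norm']; exact hw2
  have hb2 : (d - a) ^ 2 = b ^ 2 := by rw [← sq_abs (d - a), ht]
  have hinner : ⟪w - p, q - p⟫ = a * d := by
    have h := norm_sub_sq_real (w - p) (q - p)
    rw [hx, hu, hxu] at h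
    nlinarith [h, hb2]
  have hz : ‖(w - p) - (a / d) • (q - p)‖ ^ 2 = 0 := by
    rw [norm_sub_sq_real, real_inner_smul_right, hinner, norm_smul, hx, hu,
      Real.norm_eq_abs, mul_pow, sq_abs]
    field_simp
    ring
  have hz2 : (w - p) - (a / d) • (q - p) = 0 := by
    have := norm_eq_zero.mp (by nlinarith [norm_nonneg ((w - p) - (a / d) • (q - p)), hz] :
      ‖(w - p) - (a / d) • (q - p)‖ = 0)
    exact this
  have : w - p = (a / d) • (q - p) := by
    have := sub_eq_zero.mp hz2
    exact this
  rw [← this]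
  abel

lemma geo_ext (n : ℕ) (hn : 2 ≤ n) (p q : EuclideanSpace ℝ (Fin n)) (a b : ℝ)
    (ha : 0 < a) (hb : 0 < b) (hd : dist p q = a + b) :
    ∃! w, dist p w = a ∧ dist q w = b := by
  obtain ⟨w, hw⟩ := exists_sol n hn p q a b (le_of_lt ha) (le_of_lt hb)
    (by rw [hd, abs_le]; constructor <;> linarith)
    (le_of_eq hd)
  have hpq : p ≠ q := by
    intro h; rw [h, dist_self] at hd; linarith
  refine ⟨w, hw, fun w' hw' => ?_⟩
  have h1 := uniq_sol n p q w' a b hpq hw'.1 hw'.2 (by rw [hd]; rw [abs_of_pos (by linarith : (0:ℝ) < a + b - a)]; ring_nf)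
  have h2 := uniq_sol n p q w a b hpq hw.1 hw.2 (by rw [hd]; rw [abs_of_pos (by linarith : (0:ℝ) < a + b - a)]; ring_nf)
  rw [h1, h2]

lemma geo_int (n : ℕ) (hn : 2 ≤ n) (p q : EuclideanSpace ℝ (Fin n)) (a b : ℝ)
    (hb : 0 < b) (hba : b < a) (hd : dist p q = a - b) :
    ∃! w, dist p w = a ∧ dist q w = b := by
  obtain ⟨w, hw⟩ := exists_sol n hn p q a b (by linarith) (le_of_lt hb)
    (by rw [hd, abs_of_pos (by linarith : (0:ℝ) < a - b)]) (by linarith [hd])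
  have hpq : p ≠ q := by
    intro h; rw [h, dist_self] at hd; linarith
  have habs : |dist p q - a| = b := by
    rw [hd]
    rw [abs_of_neg (by linarith : a - b - a < 0)]
    ring
  refine ⟨w, hw, fun w' hw' => ?_⟩
  rw [uniq_sol n p q w' a b hpq hw'.1 hw'.2 habs, uniq_sol n p q w a b hpq hw.1 hw.2 habs]

lemma geo_back (n : ℕ) (hn : 2 ≤ n) (p q : EuclideanSpace ℝ (Fin n)) (a b : ℝ)
    (ha : 0 < a) (hb : 0 < b) (h : ∃! w, dist p w = a ∧ dist q w = b) :
    dist p q = a + b ∨ dist p q = a - b ∨ dist p q = b - a := by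
  obtain ⟨w, ⟨hw1, hw2⟩, huniq⟩ := h
  have t1 : dist p q ≤ a + b := by
    calc dist p q ≤ dist p w + dist w q := dist_triangle p w q
    _ = a + b := by rw [hw1, dist_comm w q, hw2]
  have t2 : a ≤ dist p q + b := by
    calc a = dist p w := hw1.symm
    _ ≤ dist p q + dist q w := dist_triangle p q w
    _ = dist p q + b := by rw [hw2]
  have t3 : b ≤ dist p q + a := by
    calc b = dist q w := hw2.symm
    _ ≤ dist q p + dist p w := dist_triangle q p w
    _ = dist p q + a := by rw [dist_comm q p, hw1]
  by_contra hcon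
  push_neg at hcon
  obtain ⟨hc1, hc2, hc3⟩ := hcon
  obtain ⟨w₁, w₂, hne, hs1, hs2⟩ := two_sol n hn p q a b ha hb
    (abs_sub_le_iff.mpr ⟨by linarith, by linarith⟩)
    (lt_of_le_of_ne t1 hc1) hc2 hc3
  exact hne ((huniq w₁ hs1).trans (huniq w₂ hs2).symm)

lemma chain_fwd (n : ℕ) (hn : 2 ≤ n) (g : EuclideanSpace ℝ (Fin n) → EuclideanSpace ℝ (Fin n))
    (r₂ : ℝ) (hr₂ : 0 < r₂)
    (hg₂ : ∀ x y, dist x y = r₂ → dist (g x) (g y) = r₂) :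
    ∀ m : ℕ, 2 ≤ m → ∀ x y, dist x y ≤ m * r₂ → dist (g x) (g y) ≤ m * r₂ := by
  intro m hm
  induction m, hm using Nat.le_induction with
  | base =>
    intro x y hxy
    obtain ⟨w, hw1, hw2⟩ := exists_sol n hn x y r₂ r₂ (le_of_lt hr₂) (le_of_lt hr₂)
      (by simp [abs_of_nonneg, dist_nonneg]) (by push_cast at hxy ⊢; linarith)
    have h1 := hg₂ x w hw1
    have h2 := hg₂ y w hw2
    calc dist (g x) (g y) ≤ dist (g x) (g w) + dist (g w) (g y) := dist_triangle _ _ _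
    _ = r₂ + r₂ := by rw [h1, dist_comm (g w) (g y), h2]
    _ = (2 : ℕ) * r₂ := by push_cast; ring
  | succ m hm IH =>
    intro x y hxy
    push_cast at hxy
    by_cases h : dist x y ≤ m * r₂
    · have := IH x y (by push_cast; linarith)
      push_cast at this ⊢
      have hm2 : (2:ℝ) ≤ (m:ℝ) := by exact_mod_cast hm
      linarith
    · push_cast at h
      have hd2 : r₂ ≤ dist x y := by
        have hm2 : (2:ℝ) ≤ (m:ℝ) := by exact_mod_cast hm
        nlinarith [not_le.mp h]
      obtain ⟨w, hw1, hw2⟩ := exists_sol n hn x y r₂ (dist x y - r₂) (le_of_lt hr₂)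
        (by linarith)
        (by rw [abs_le]; constructor <;> [linarith [dist_nonneg (x := x) (y := y)]; linarith])
        (by linarith)
      have h1 := hg₂ x w hw1
      have h2 : dist (g w) (g y) ≤ (m : ℝ) * r₂ := by
        have hwy : dist w y ≤ (m : ℝ) * r₂ := by
          rw [dist_comm w y, hw2]; linarith
        have := IH w y (by push_cast; exact hwy)
        push_cast at this; exact this
      calc dist (g x) (g y) ≤ dist (g x) (g w) + dist (g w) (g y) := dist_triangle _ _ _
      _ ≤ r₂ + m * r₂ := by rw [h1]; linarith
      _ = ((m + 1 : ℕ) : ℝ) * r₂ := by push_cast; ring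

lemma eq_mul_iff (n : ℕ) (hn : 2 ≤ n)
    (g g' : EuclideanSpace ℝ (Fin n) → EuclideanSpace ℝ (Fin n))
    (hgg' : ∀ x, g' (g x) = x) (hg'g : ∀ x, g (g' x) = x)
    (r₂ : ℝ) (hr₂ : 0 < r₂)
    (hg₂ : ∀ x y, dist x y = r₂ ↔ dist (g x) (g y) = r₂) :
    ∀ m : ℕ, 1 ≤ m → ∀ x y, dist x y = m * r₂ ↔ dist (g x) (g y) = m * r₂ := by
  have hg₂' : ∀ x y, dist x y = r₂ ↔ dist (g' x) (g' y) = r₂ := by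
    intro x y
    have := hg₂ (g' x) (g' y)
    rw [hg'g, hg'g] at this
    exact this.symm
  have hbij : Function.Bijective g :=
    ⟨Function.LeftInverse.injective hgg', Function.RightInverse.surjective hg'g⟩
  have chain_iff : ∀ M : ℕ, 2 ≤ M → ∀ x y,
      (dist x y ≤ M * r₂ ↔ dist (g x) (g y) ≤ M * r₂) := by
    intro M hM x y
    constructor
    · exact chain_fwd n hn g r₂ hr₂ (fun a b h => (hg₂ a b).mp h) M hM x y
    · intro h
      have := chain_fwd n hn g' r₂ hr₂ (fun a b h => (hg₂' a b).mp h) M hM (g x) (g y) h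
      rwa [hgg', hgg'] at this
  intro m hm
  induction m, hm using Nat.le_induction with
  | base => intro x y; simpa using hg₂ x y
  | succ m hm IH =>
    intro x y
    have hm1 : (1:ℝ) ≤ (m:ℝ) := by exact_mod_cast hm
    have hEU : ∀ p q : EuclideanSpace ℝ (Fin n),
        ((∃! w, dist p w = (m:ℝ) * r₂ ∧ dist q w = r₂) ↔
          (∃! w', dist (g p) w' = (m:ℝ) * r₂ ∧ dist (g q) w' = r₂)) := by
      intro p q
      exact (existsUnique_congr (fun w => and_congr (IH p w) (hg₂ q w))).trans
        (Function.Bijective.existsUnique_iff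
          (p := fun w' => dist (g p) w' = (m:ℝ) * r₂ ∧ dist (g q) w' = r₂) hbij).symm
    have hcast : ((m + 1 : ℕ) : ℝ) = (m : ℝ) + 1 := by push_cast; ring
    rcases eq_or_lt_of_le hm with hm1' | hm2
    · -- m = 1
      have hmr : (m:ℝ) = 1 := by exact_mod_cast hm1'.symm
      have char : ∀ p q : EuclideanSpace ℝ (Fin n),
          dist p q = ((m:ℝ) + 1) * r₂ ↔
            (dist p q ≤ (2:ℕ) * r₂ ∧ p ≠ q ∧
              ∃! w, dist p w = (m:ℝ) * r₂ ∧ dist q w = r₂) := by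
        intro p q
        rw [hmr]
        constructor
        · intro h
          refine ⟨by push_cast; linarith, ?_, ?_⟩
          · intro hpq
            rw [hpq, dist_self] at h
            nlinarith
          · simp only [one_mul]
            exact geo_ext n hn p q r₂ r₂ hr₂ hr₂ (by linarith)
        · rintro ⟨h1, h2, h3⟩
          simp only [one_mul] at h3
          rcases geo_back n hn p q r₂ r₂ hr₂ hr₂ h3 with h | h | h
          · rw [h]; ring
          · exfalso; apply h2; rw [← dist_eq_zero]; rw [h]; ring
          · exfalso; apply h2; rw [← dist_eq_zero]; rw [h]; ring
      rw [hcast, char x y, char (g x) (g y)]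
      apply and_congr (chain_iff 2 le_rfl x y)
      apply and_congr _ (hEU x y)
      constructor
      · intro h hc; exact h (hbij.1 hc)
      · intro h hc; exact h (congrArg g hc)
    · -- 2 ≤ m
      have hm2' : 2 ≤ m := hm2
      have hm2r : (2:ℝ) ≤ (m:ℝ) := by exact_mod_cast hm2
      have hmpos : 0 < (m:ℝ) * r₂ := by nlinarith
      have char : ∀ p q : EuclideanSpace ℝ (Fin n),
          dist p q = ((m:ℝ) + 1) * r₂ ↔
            (dist p q ≤ (m + 1 : ℕ) * r₂ ∧ ¬(dist p q ≤ (m:ℕ) * r₂) ∧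
              ∃! w, dist p w = (m:ℝ) * r₂ ∧ dist q w = r₂) := by
        intro p q
        constructor
        · intro h
          refine ⟨by rw [hcast]; linarith, by push_cast; nlinarith, ?_⟩
          exact geo_ext n hn p q ((m:ℝ) * r₂) r₂ hmpos hr₂ (by linarith)
        · rintro ⟨h1, h2, h3⟩
          push_cast at h1 h2
          rcases geo_back n hn p q ((m:ℝ) * r₂) r₂ hmpos hr₂ h3 with h | h | h
          · rw [h]; ring
          · exfalso
            apply h2
            rw [h]
            nlinarith
          · exfalso
            have := dist_nonneg (x := p) (y := q)
            rw [h] at this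
            nlinarith
      rw [hcast, char x y, char (g x) (g y)]
      apply and_congr (chain_iff (m+1) (by omega) x y)
      exact and_congr (not_congr (chain_iff m hm2' x y)) (hEU x y)

lemma final_iff (n : ℕ) (hn : 2 ≤ n)
    (g g' : EuclideanSpace ℝ (Fin n) → EuclideanSpace ℝ (Fin n))
    (hgg' : ∀ x, g' (g x) = x) (hg'g : ∀ x, g (g' x) = x)
    (r₁ r₂ : ℝ) (hr₂ : 0 < r₂) (hr : r₂ < r₁)
    (hg₁ : ∀ x y, dist x y = r₁ ↔ dist (g x) (g y) = r₁)
    (hg₂ : ∀ x y, dist x y = r₂ ↔ dist (g x) (g y) = r₂)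
    (k : ℕ) (hk : 1 ≤ k) (hkr : (k:ℝ) * r₂ < r₁) (hkr2 : r₁ - (k:ℝ) * r₂ < r₂) :
    ∀ x y, dist x y = r₁ - (k:ℝ) * r₂ ↔ dist (g x) (g y) = r₁ - (k:ℝ) * r₂ := by
  have hg₂' : ∀ x y, dist x y = r₂ ↔ dist (g' x) (g' y) = r₂ := by
    intro x y
    have := hg₂ (g' x) (g' y)
    rw [hg'g, hg'g] at this
    exact this.symm
  have hbij : Function.Bijective g :=
    ⟨Function.LeftInverse.injective hgg', Function.RightInverse.surjective hg'g⟩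
  have hk1 : (1:ℝ) ≤ (k:ℝ) := by exact_mod_cast hk
  have hkpos : 0 < (k:ℝ) * r₂ := by nlinarith
  have chain2 : ∀ x y, (dist x y ≤ (2:ℕ) * r₂ ↔ dist (g x) (g y) ≤ (2:ℕ) * r₂) := by
    intro x y
    constructor
    · exact chain_fwd n hn g r₂ hr₂ (fun a b h => (hg₂ a b).mp h) 2 le_rfl x y
    · intro h
      have := chain_fwd n hn g' r₂ hr₂ (fun a b h => (hg₂' a b).mp h) 2 le_rfl (g x) (g y) h
      rwa [hgg', hgg'] at this
  have hEU : ∀ p q : EuclideanSpace ℝ (Fin n),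
      ((∃! z, dist p z = r₁ ∧ dist q z = (k:ℝ) * r₂) ↔
        (∃! z', dist (g p) z' = r₁ ∧ dist (g q) z' = (k:ℝ) * r₂)) := by
    intro p q
    exact (existsUnique_congr (fun z => and_congr (hg₁ p z)
        (eq_mul_iff n hn g g' hgg' hg'g r₂ hr₂ hg₂ k hk q z))).trans
      (Function.Bijective.existsUnique_iff
        (p := fun z' => dist (g p) z' = r₁ ∧ dist (g q) z' = (k:ℝ) * r₂) hbij).symm
  have char : ∀ p q : EuclideanSpace ℝ (Fin n),
      dist p q = r₁ - (k:ℝ) * r₂ ↔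
        (dist p q ≤ (2:ℕ) * r₂ ∧ ∃! z, dist p z = r₁ ∧ dist q z = (k:ℝ) * r₂) := by
    intro p q
    constructor
    · intro h
      refine ⟨by push_cast; linarith, ?_⟩
      exact geo_int n hn p q r₁ ((k:ℝ) * r₂) hkpos hkr h
    · rintro ⟨h1, h3⟩
      push_cast at h1
      rcases geo_back n hn p q r₁ ((k:ℝ) * r₂) (by linarith) hkpos h3 with h | h | h
      · exfalso; nlinarith
      · exact h
      · exfalso
        have := dist_nonneg (x := p) (y := q)
        nlinarith
  intro x y
  rw [char x y, char (g x) (g y)]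
  exact and_congr (chain2 x y) (hEU x y)

theorem stmt_18 (n : ℕ) (hn : 2 ≤ n)
    (f : EuclideanSpace ℝ (Fin n) → EuclideanSpace ℝ (Fin n))
    (hf : Function.Surjective f)
    (r₁ r₂ : ℝ) (hr₂ : 0 < r₂) (hr : r₂ < r₁)
    (hp₁ : ∀ x y, dist x y = r₁ ↔ dist (f x) (f y) = r₁)
    (hp₂ : ∀ x y, dist x y = r₂ ↔ dist (f x) (f y) = r₂) :
    r₁ - ⌊r₁ / r₂⌋ * r₂ = 0 ∨
      ∀ x y, dist x y = r₁ - ⌊r₁ / r₂⌋ * r₂ ↔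
        dist (f x) (f y) = r₁ - ⌊r₁ / r₂⌋ * r₂ := by
  have hr₁ : 0 < r₁ := lt_trans hr₂ hr
  set K : ℤ := ⌊r₁ / r₂⌋ with hK
  have hK1 : 1 ≤ K := by
    rw [hK, Int.le_floor]
    rw [Int.cast_one, le_div_iff₀ hr₂, one_mul]
    exact le_of_lt hr
  have hKle : (K:ℝ) ≤ r₁ / r₂ := Int.floor_le _
  have hKgt : r₁ / r₂ < (K:ℝ) + 1 := Int.lt_floor_add_one _
  have hKle' : (K:ℝ) * r₂ ≤ r₁ := by
    rw [le_div_iff₀ hr₂] at hKle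
    exact hKle
  have hKgt' : r₁ < ((K:ℝ) + 1) * r₂ := by
    rw [div_lt_iff₀ hr₂] at hKgt
    exact hKgt
  by_cases h0 : r₁ - (K:ℝ) * r₂ = 0
  · exact Or.inl h0
  right
  have hpos : (K:ℝ) * r₂ < r₁ := lt_of_le_of_ne hKle' (fun h => h0 (by linarith))
  -- injectivity of f
  have hinj : Function.Injective f := by
    intro x y hxy
    by_contra hne
    have hd : 0 < dist x y := dist_pos.mpr hne
    obtain ⟨z, hz1, hz2⟩ := exists_sol n hn x y r₁ (dist x y + r₁) (le_of_lt hr₁)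
      (by linarith)
      (by rw [abs_le]; constructor <;> linarith)
      (by linarith)
    have h1 : dist (f x) (f z) = r₁ := (hp₁ x z).mp hz1
    rw [hxy] at h1
    have h2 : dist y z = r₁ := (hp₁ y z).mpr h1
    rw [h2] at hz2
    linarith
  have hbijf : Function.Bijective f := ⟨hinj, hf⟩
  set e := Equiv.ofBijective f hbijf with he
  have hgg' : ∀ x, e.symm (f x) = x := fun x => e.symm_apply_apply x
  have hg'g : ∀ x, f (e.symm x) = x := fun x => e.apply_symm_apply x
  set k : ℕ := K.toNat with hk
  have hkK : ((k:ℕ):ℝ) = (K:ℝ) := by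
    rw [hk]
    exact_mod_cast congrArg (Int.cast : ℤ → ℝ) (Int.toNat_of_nonneg (by omega))
  have hk1 : 1 ≤ k := by omega
  have hmain := final_iff n hn f (fun x => e.symm x) hgg' hg'g r₁ r₂ hr₂ hr hp₁ hp₂
    k hk1 (by rw [hkK]; exact hpos) (by rw [hkK]; linarith)
  intro x y
  have := hmain x y
  rwa [hkK] at this
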